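/- Let n ≥ 1, let f : [0,1) → ℝ be defined by f(0) = 1/2 and f(x) = (1 − √(1 − x²))/x² for 0 < x < 1, and let (p, q) and (p′, q′) be pairs of vectors in ℝ^{n+1} each satisfying ‖q‖ = 1, ⟨p, q⟩ = 0, ‖p‖ < 1 (and similarly for the primed pair). If there exists λ ∈ ℂ with |λ| = 1 such that √(f(‖p‖))·p_j + i·q_j/√(f(‖p‖)) = λ·(√(f(‖p′‖))·p′_j + i·q′_j/√(f(‖p′‖))) for all j, then (p′, q′) = (p, q) or (p′, q′) = (−p, −q). -/

import Mathlib

open scoped RealInnerProductSpace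

/-- The auxiliary function `f` of Section 3.1: `f(0) = 1/2` and
`f(x) = (1 − √(1 − x²))/x²` for `x ≠ 0`. -/
noncomputable def auxF (x : ℝ) : ℝ :=
  if x = 0 then 1 / 2 else (1 - Real.sqrt (1 - x ^ 2)) / x ^ 2

lemma auxF_eq {x : ℝ} (hx0 : 0 ≤ x) (hx1 : x < 1) :
    auxF x = 1 / (1 + Real.sqrt (1 - x ^ 2)) := by
  unfold auxF
  split_ifs with h
  · simp [h]; norm_num
  · have hx2 : x ^ 2 < 1 := by nlinarith
    have hs : Real.sqrt (1 - x ^ 2) ^ 2 = 1 - x ^ 2 := Real.sq_sqrt (by linarith)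
    have hsn : 0 ≤ Real.sqrt (1 - x ^ 2) := Real.sqrt_nonneg _
    have hx2' : x ^ 2 ≠ 0 := pow_ne_zero _ h
    field_simp
    nlinarith [hs]

lemma sum_sq_lift (n : ℕ) (p q : EuclideanSpace ℝ (Fin (n + 1)))
    (hq : ‖q‖ = 1) (hpq : ⟪p, q⟫ = 0) (hp : ‖p‖ < 1) :
    ∑ j, (((Real.sqrt (auxF ‖p‖) * p j : ℝ) : ℂ) +
        Complex.I * ((q j / Real.sqrt (auxF ‖p‖) : ℝ) : ℂ)) ^ 2
      = ((-2 * Real.sqrt (1 - ‖p‖ ^ 2) : ℝ) : ℂ) := by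
  set x := ‖p‖ with hx
  have hx0 : 0 ≤ x := norm_nonneg p
  set s := Real.sqrt (1 - x ^ 2) with hsdef
  have hs2 : s ^ 2 = 1 - x ^ 2 := Real.sq_sqrt (by nlinarith)
  have hsn : 0 ≤ s := Real.sqrt_nonneg _
  have hA : auxF x = 1 / (1 + s) := auxF_eq hx0 hp
  have hApos : 0 < auxF x := by rw [hA]; positivity
  set a := Real.sqrt (auxF x) with hadef
  have ha2 : a ^ 2 = auxF x := Real.sq_sqrt hApos.le
  have ha0 : a ≠ 0 := by
    have : 0 < a := Real.sqrt_pos.2 hApos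
    exact this.ne'
  have hP : ∑ j, p j ^ 2 = x ^ 2 := by
    have h1 : x ^ 2 = ∑ i, ‖p i‖ ^ 2 := by
      rw [hx, EuclideanSpace.norm_eq, Real.sq_sqrt (Finset.sum_nonneg fun i _ => sq_nonneg _)]
    rw [h1]
    exact Finset.sum_congr rfl fun i _ => by rw [Real.norm_eq_abs, sq_abs]
  have hQ : ∑ j, q j ^ 2 = 1 := by
    have h1 : ‖q‖ ^ 2 = ∑ i, ‖q i‖ ^ 2 := by
      rw [EuclideanSpace.norm_eq, Real.sq_sqrt (Finset.sum_nonneg fun i _ => sq_nonneg _)]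
    have h2 : ∑ i, ‖q i‖ ^ 2 = ∑ j, q j ^ 2 :=
      Finset.sum_congr rfl fun i _ => by rw [Real.norm_eq_abs, sq_abs]
    rw [← h2, ← h1, hq, one_pow]
  have hPQ : ∑ j, p j * q j = 0 := by
    rw [← hpq]
    simp [PiLp.inner_apply, RCLike.inner_apply]
    exact Finset.sum_congr rfl fun i _ => mul_comm _ _
  have expand : ∀ j ∈ Finset.univ, (((a * p j : ℝ) : ℂ) +
      Complex.I * ((q j / a : ℝ) : ℂ)) ^ 2
      = ((a ^ 2 * p j ^ 2 - q j ^ 2 / a ^ 2 : ℝ) : ℂ)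
        + ((2 * (a * p j * (q j / a)) : ℝ) : ℂ) * Complex.I := by
    intro j _
    push_cast
    linear_combination ((q j : ℂ) / (a : ℂ)) ^ 2 * Complex.I_sq
  rw [Finset.sum_congr rfl expand, Finset.sum_add_distrib, ← Finset.sum_mul]
  have e1 : ∑ j, ((a ^ 2 * p j ^ 2 - q j ^ 2 / a ^ 2 : ℝ) : ℂ)
      = ((-2 * s : ℝ) : ℂ) := by
    rw [← Complex.ofReal_sum]
    congr 1
    have : ∑ j, (a ^ 2 * p j ^ 2 - q j ^ 2 / a ^ 2)
        = a ^ 2 * (∑ j, p j ^ 2) - (∑ j, q j ^ 2) / a ^ 2 := by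
      rw [Finset.sum_sub_distrib, Finset.mul_sum, Finset.sum_div]
    rw [this, hP, hQ, ha2, hA]
    have h1s : (1 : ℝ) + s ≠ 0 := by positivity
    field_simp
    nlinarith [hs2]
  have e2 : ∑ j, ((2 * (a * p j * (q j / a)) : ℝ) : ℂ) = 0 := by
    rw [← Complex.ofReal_sum]
    have : ∀ j ∈ Finset.univ, 2 * (a * p j * (q j / a)) = 2 * (p j * q j) := by
      intro j _; field_simp
    rw [Finset.sum_congr rfl this, ← Finset.mul_sum, hPQ]
    simp
  rw [e1, e2, zero_mul, add_zero]

/-- The injectivity argument of Lemma 3.1: if the lifts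
`z_j = √(f(‖p‖))·p_j + i·q_j/√(f(‖p‖))` of two points `(p, q)`, `(p′, q′)` of the open
unit disk cotangent bundle of `Sⁿ` agree up to a unit complex scalar `λ`, then
`(p′, q′) = ±(p, q)`. -/
theorem psiP_injective (n : ℕ) (hn : 1 ≤ n)
    (p q p' q' : EuclideanSpace ℝ (Fin (n + 1)))
    (hq : ‖q‖ = 1) (hpq : ⟪p, q⟫ = 0) (hp : ‖p‖ < 1)
    (hq' : ‖q'‖ = 1) (hpq' : ⟪p', q'⟫ = 0) (hp' : ‖p'‖ < 1)
    (lam : ℂ) (hlam : ‖lam‖ = 1)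
    (h : ∀ j, ((Real.sqrt (auxF ‖p‖) * p j : ℝ) : ℂ) +
        Complex.I * ((q j / Real.sqrt (auxF ‖p‖) : ℝ) : ℂ) =
      lam * (((Real.sqrt (auxF ‖p'‖) * p' j : ℝ) : ℂ) +
        Complex.I * ((q' j / Real.sqrt (auxF ‖p'‖) : ℝ) : ℂ))) :
    (p' = p ∧ q' = q) ∨ (p' = -p ∧ q' = -q) := by
  have hS := sum_sq_lift n p q hq hpq hp
  have hS' := sum_sq_lift n p' q' hq' hpq' hp'
  set s := Real.sqrt (1 - ‖p‖ ^ 2) with hsdef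
  set s' := Real.sqrt (1 - ‖p'‖ ^ 2) with hsdef'
  have hspos : 0 < s := Real.sqrt_pos.2 (by nlinarith [norm_nonneg p])
  have hspos' : 0 < s' := Real.sqrt_pos.2 (by nlinarith [norm_nonneg p'])
  have hsum : ((-2 * s : ℝ) : ℂ) = lam ^ 2 * ((-2 * s' : ℝ) : ℂ) := by
    rw [← hS, ← hS', Finset.mul_sum]
    exact Finset.sum_congr rfl fun j _ => by rw [h j]; ring
  have hs'c : ((s' : ℝ) : ℂ) ≠ 0 := by exact_mod_cast hspos'.ne'
  have hlam2 : lam ^ 2 = ((s / s' : ℝ) : ℂ) := by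
    push_cast at hsum ⊢
    rw [eq_div_iff hs'c]
    linear_combination hsum / 2
  have hss' : s = s' := by
    have habs : ‖lam ^ 2‖ = 1 := by rw [norm_pow, hlam, one_pow]
    rw [hlam2, Complex.norm_real, Real.norm_eq_abs, abs_of_pos (div_pos hspos hspos')] at habs
    field_simp at habs
    linarith
  have hxx' : ‖p'‖ = ‖p‖ := by
    have h1 : (1 : ℝ) - ‖p‖ ^ 2 = 1 - ‖p'‖ ^ 2 := by
      have := hss'
      rw [hsdef, hsdef'] at this
      exact (Real.sqrt_inj (by nlinarith [norm_nonneg p]) (by nlinarith [norm_nonneg p'])).1 this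
    nlinarith [norm_nonneg p, norm_nonneg p']
  have hlamsq : lam ^ 2 = 1 := by
    rw [hlam2, hss', div_self hspos'.ne']
    norm_num
  have hlam1 : lam = 1 ∨ lam = -1 := by
    have : (lam - 1) * (lam + 1) = 0 := by linear_combination hlamsq
    rcases mul_eq_zero.1 this with h' | h'
    · left; linear_combination h'
    · right; linear_combination h'
  have haa : Real.sqrt (auxF ‖p'‖) = Real.sqrt (auxF ‖p‖) := by rw [hxx']
  have hApos : 0 < auxF ‖p‖ := by
    rw [auxF_eq (norm_nonneg p) hp]
    positivity
  set a := Real.sqrt (auxF ‖p‖) with hadef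
  have ha0 : a ≠ 0 := (Real.sqrt_pos.2 hApos).ne'
  have hdiv : ∀ u v : ℝ, u / a = v / a → u = v := by
    intro u v huv
    field_simp at huv
    exact huv
  rcases hlam1 with hl | hl
  · left
    have key : ∀ j, p' j = p j ∧ q' j = q j := by
      intro j
      have hj := h j
      rw [hl, one_mul, haa] at hj
      have hre : a * p j = a * p' j ∧ q j / a = q' j / a := by
        rw [Complex.ext_iff] at hj
        simpa using hj
      exact ⟨(mul_left_cancel₀ ha0 hre.1).symm, (hdiv _ _ hre.2).symm⟩
    exact ⟨PiLp.ext fun j => (key j).1, PiLp.ext fun j => (key j).2⟩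
  · right
    have key : ∀ j, p' j = -(p j) ∧ q' j = -(q j) := by
      intro j
      have hj := h j
      rw [hl, neg_one_mul, haa] at hj
      have hre : a * p j = -(a * p' j) ∧ q j / a = -(q' j / a) := by
        rw [Complex.ext_iff] at hj
        simpa using hj
      constructor
      · have h1 : a * p j = a * (-(p' j)) := by rw [mul_neg]; exact hre.1
        have := mul_left_cancel₀ ha0 h1
        linarith
      · have h1 : q j / a = (-(q' j)) / a := by rw [neg_div]; exact hre.2
        have := hdiv _ _ h1
        linarith
    constructor
    · refine PiLp.ext fun j => ?_
      simpa using (key j).1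
    · refine PiLp.ext fun j => ?_
      simpa using (key j).2
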